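/- Let μ be a Lévy measure on ℝⁿ and let l ∈ ℝⁿ be a unit vector. Define q^U(rl) = ∫ ((rl·u)² ∧ 1) μ(du) and q^L(rl) = ∫_{|r l·u| ≤ 1} (r l·u)² μ(du) for r > 0. Then for all 0 < r₁ < r₂, q^U(r₂ l) − q^U(r₁ l) = ∫_{r₁}^{r₂} (2 q^L(u l)/u) du. -/

import Mathlib

open MeasureTheory Real
open scoped RealInnerProductSpace ENNReal

/-- Helper bound: `min ((r*s)^2) 1 ≤ max (r^2) 1 * min (s^2) 1`. -/
lemma min_sq_bound (r s : ℝ) : min ((r * s) ^ 2) 1 ≤ max (r ^ 2) 1 * min (s ^ 2) 1 := by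
  rcases le_total (s ^ 2) 1 with h | h
  · rw [min_eq_left h]
    calc min ((r * s) ^ 2) 1 ≤ (r * s) ^ 2 := min_le_left _ _
      _ = r ^ 2 * s ^ 2 := by ring
      _ ≤ max (r ^ 2) 1 * s ^ 2 := by
          have := sq_nonneg s
          gcongr
          exact le_max_left _ _
  · rw [min_eq_right h]
    calc min ((r * s) ^ 2) 1 ≤ 1 := min_le_right _ _
      _ ≤ max (r ^ 2) 1 * 1 := by
          rw [mul_one]; exact le_max_right _ _

/-- Pointwise key identity: for fixed `s` and `0 < r₁ ≤ r₂`,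
`min ((r₂ s)²) 1 - min ((r₁ s)²) 1 = ∫_{r₁}^{r₂} (2 r s²) 1_{|r s| ≤ 1} dr`. -/
lemma key_identity (s r₁ r₂ : ℝ) (h₁ : 0 < r₁) (h₁₂ : r₁ ≤ r₂) :
    min ((r₂ * s) ^ 2) 1 - min ((r₁ * s) ^ 2) 1
      = ∫ r in Set.Ioc r₁ r₂, (if |r * s| ≤ 1 then 2 * r * s ^ 2 else 0) := by
  by_cases hs : s = 0
  · subst hs; simp
  have hs' : 0 < |s| := abs_pos.mpr hs
  set c : ℝ := 1 / |s| with hc_def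
  have hc : 0 < c := by positivity
  have hcs : s ^ 2 * c ^ 2 = 1 := by
    rw [hc_def]; rw [← sq_abs s]; field_simp
  -- the value of the min as a function of r > 0
  have hmin : ∀ r : ℝ, 0 < r → min ((r * s) ^ 2) 1 = s ^ 2 * (min r c) ^ 2 := by
    intro r hr
    rcases le_total r c with h | h
    · rw [min_eq_left h, min_eq_left]
      · ring
      · have hr2 : r ^ 2 ≤ c ^ 2 := by nlinarith
        nlinarith [mul_le_mul_of_nonneg_right hr2 (sq_nonneg s)]
    · rw [min_eq_right h, min_eq_right, hcs]
      have hr2 : c ^ 2 ≤ r ^ 2 := by nlinarith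
      nlinarith [mul_le_mul_of_nonneg_right hr2 (sq_nonneg s)]
  -- rewrite the integrand as an indicator
  have hind : ∀ r ∈ Set.Ioc r₁ r₂,
      (if |r * s| ≤ 1 then 2 * r * s ^ 2 else 0)
        = Set.indicator (Set.Iic c) (fun r => 2 * r * s ^ 2) r := by
    intro r hr
    have hr0 : 0 < r := h₁.trans_le hr.1.le
    have hiff : |r * s| ≤ 1 ↔ r ≤ c := by
      rw [abs_mul, abs_of_pos hr0, hc_def, le_div_iff₀ hs']
    simp only [Set.indicator_apply, Set.mem_Iic, hiff]
  rw [setIntegral_congr_fun measurableSet_Ioc hind]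
  rw [integral_indicator measurableSet_Iic, Measure.restrict_restrict measurableSet_Iic]
  have hset : Set.Iic c ∩ Set.Ioc r₁ r₂ = Set.Ioc r₁ (min r₂ c) := by
    ext x
    simp only [Set.mem_inter_iff, Set.mem_Iic, Set.mem_Ioc, le_min_iff]
    tauto
  rw [hset]
  rcases le_or_gt r₁ (min r₂ c) with h | h
  · -- nontrivial integral
    have hderiv : ∀ r : ℝ, HasDerivAt (fun r : ℝ => s ^ 2 * r ^ 2) (2 * r * s ^ 2) r := by
      intro r
      have := (hasDerivAt_pow 2 r).const_mul (s ^ 2)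
      simpa [mul_comm, mul_assoc, mul_left_comm] using this
    have hcont : IntervalIntegrable (fun r : ℝ => 2 * r * s ^ 2) volume r₁ (min r₂ c) :=
      (by continuity : Continuous fun r : ℝ => 2 * r * s ^ 2).intervalIntegrable _ _
    have hInt := intervalIntegral.integral_eq_sub_of_hasDerivAt
      (fun r _ => hderiv r) hcont
    rw [← intervalIntegral.integral_of_le h, hInt]
    have h1c : min r₁ c = r₁ := min_eq_left (h.trans (min_le_right _ _))
    have h2 : min ((r₂ * s) ^ 2) 1 = s ^ 2 * (min r₂ c) ^ 2 := hmin r₂ (h₁.trans_le h₁₂)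
    have h1 : min ((r₁ * s) ^ 2) 1 = s ^ 2 * r₁ ^ 2 := by rw [hmin r₁ h₁, h1c]
    rw [h2, h1]
  · -- empty interval: c < r₁
    have hcr : c < r₁ := by
      rcases min_cases r₂ c with ⟨heq, _⟩ | ⟨heq, _⟩
      · rw [heq] at h; linarith
      · rwa [heq] at h
    rw [Set.Ioc_eq_empty (by exact fun hlt => absurd hlt (not_lt.mpr h.le)), Measure.restrict_empty,
      integral_zero_measure]
    have h2 : min ((r₂ * s) ^ 2) 1 = s ^ 2 * c ^ 2 := by
      rw [hmin r₂ (h₁.trans_le h₁₂), min_eq_right (hcr.le.trans h₁₂)]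
    have h1 : min ((r₁ * s) ^ 2) 1 = s ^ 2 * c ^ 2 := by
      rw [hmin r₁ h₁, min_eq_right hcr.le]
    rw [h2, h1, sub_self]

/-- A measure which integrates `min (‖u‖^2) 1` and vanishes at `{0}` is sigma-finite. -/
lemma sigmaFinite_of_levy {n : ℕ} (μ : Measure (EuclideanSpace ℝ (Fin n)))
    (hzero : μ {0} = 0)
    (hlevy : ∫⁻ u, ENNReal.ofReal (min (‖u‖ ^ 2) 1) ∂μ < ∞) : SigmaFinite μ := by
  refine ⟨⟨⟨fun k => {0} ∪ {u | 1 / (k + 1 : ℝ) ≤ ‖u‖}, fun _ => trivial, ?_, ?_⟩⟩⟩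
  · intro k
    set a : ℝ := 1 / (k + 1 : ℝ) with ha_def
    have ha : 0 < a := by positivity
    set ε : ℝ := min (a ^ 2) 1 with hε_def
    have hε : 0 < ε := lt_min (by positivity) one_pos
    have hmeas : MeasurableSet {u : EuclideanSpace ℝ (Fin n) | a ≤ ‖u‖} :=
      measurableSet_le measurable_const continuous_norm.measurable
    have hbound : ∀ u ∈ {u : EuclideanSpace ℝ (Fin n) | a ≤ ‖u‖},
        ENNReal.ofReal ε ≤ ENNReal.ofReal (min (‖u‖ ^ 2) 1) := by
      intro u hu
      apply ENNReal.ofReal_le_ofReal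
      have hu' : a ≤ ‖u‖ := hu
      exact min_le_min (by nlinarith [mul_le_mul hu' hu' ha.le (norm_nonneg u)]) le_rfl
    have hfin : μ {u : EuclideanSpace ℝ (Fin n) | a ≤ ‖u‖} < ∞ := by
      by_contra htop
      push_neg at htop
      have heq : μ {u : EuclideanSpace ℝ (Fin n) | a ≤ ‖u‖} = ∞ := top_le_iff.mp htop
      have : ENNReal.ofReal ε * μ {u : EuclideanSpace ℝ (Fin n) | a ≤ ‖u‖}
          ≤ ∫⁻ u, ENNReal.ofReal (min (‖u‖ ^ 2) 1) ∂μ := by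
        rw [← setLIntegral_const]
        refine le_trans (setLIntegral_mono' hmeas hbound) ?_
        exact setLIntegral_le_lintegral _ _
      rw [heq, ENNReal.mul_top (by simp [ENNReal.ofReal_eq_zero, not_le, hε])] at this
      exact absurd (top_le_iff.mp this) hlevy.ne
    calc μ ({0} ∪ {u : EuclideanSpace ℝ (Fin n) | a ≤ ‖u‖})
        ≤ μ {0} + μ {u : EuclideanSpace ℝ (Fin n) | a ≤ ‖u‖} := measure_union_le _ _
      _ < ∞ := by rw [hzero, zero_add]; exact hfin
  · apply Set.eq_univ_of_forall
    intro u
    by_cases hu : u = 0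
    · exact Set.mem_iUnion.mpr ⟨0, Or.inl hu⟩
    · have hnu : 0 < ‖u‖ := norm_pos_iff.mpr hu
      obtain ⟨k, hk⟩ := exists_nat_gt (1 / ‖u‖)
      refine Set.mem_iUnion.mpr ⟨k, Or.inr ?_⟩
      show 1 / (k + 1 : ℝ) ≤ ‖u‖
      rw [div_le_iff₀ (by positivity)]
      rw [div_lt_iff₀ hnu] at hk
      nlinarith

/-- For a Lévy measure `μ` on `ℝⁿ` and a unit vector `l`,
with `q^U(rl) = ∫ ((r⟪l,u⟫)² ∧ 1) dμ` and `q^L(rl) = ∫_{|r⟪l,u⟫| ≤ 1} (r⟪l,u⟫)² dμ`,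
for all `0 < r₁ < r₂` one has
`q^U(r₂ l) − q^U(r₁ l) = ∫_{r₁}^{r₂} (2 q^L(r l) / r) dr`. -/
theorem stmt1 {n : ℕ} (μ : Measure (EuclideanSpace ℝ (Fin n)))
    (hzero : μ {0} = 0)
    (hlevy : ∫⁻ u, ENNReal.ofReal (min (‖u‖ ^ 2) 1) ∂μ < ∞)
    (l : EuclideanSpace ℝ (Fin n)) (hl : ‖l‖ = 1)
    (r₁ r₂ : ℝ) (h₁ : 0 < r₁) (h₁₂ : r₁ < r₂) :
    (∫ u, min ((r₂ * ⟪l, u⟫) ^ 2) 1 ∂μ) - (∫ u, min ((r₁ * ⟪l, u⟫) ^ 2) 1 ∂μ)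
      = ∫ r in r₁..r₂, (2 / r) * ∫ u in {u | |r * ⟪l, u⟫| ≤ 1}, (r * ⟪l, u⟫) ^ 2 ∂μ := by
  classical
  haveI : SigmaFinite μ := sigmaFinite_of_levy μ hzero hlevy
  have hs_cont : Continuous fun u : EuclideanSpace ℝ (Fin n) => ⟪l, u⟫ :=
    continuous_const.inner continuous_id
  have hs_meas : Measurable fun u : EuclideanSpace ℝ (Fin n) => ⟪l, u⟫ := hs_cont.measurable
  -- the dominating weight
  set w : EuclideanSpace ℝ (Fin n) → ℝ := fun u => min (‖u‖ ^ 2) 1 with hw_def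
  have hw_nn : ∀ u, 0 ≤ w u := fun u => le_min (by positivity) one_pos.le
  have hw_int : Integrable w μ := by
    refine ⟨((continuous_norm.pow 2).min continuous_const).aestronglyMeasurable, ?_⟩
    rw [hasFiniteIntegral_iff_norm]
    have : ∀ u : EuclideanSpace ℝ (Fin n),
        ENNReal.ofReal ‖w u‖ = ENNReal.ofReal (min (‖u‖ ^ 2) 1) := by
      intro u; rw [Real.norm_eq_abs, abs_of_nonneg (hw_nn u)]
    simpa only [this] using hlevy
  -- inner product bound
  have hsu : ∀ u : EuclideanSpace ℝ (Fin n), ⟪l, u⟫ ^ 2 ≤ ‖u‖ ^ 2 := by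
    intro u
    have h := abs_real_inner_le_norm l u
    rw [hl, one_mul] at h
    calc ⟪l, u⟫ ^ 2 = |⟪l, u⟫| ^ 2 := (sq_abs _).symm
      _ ≤ ‖u‖ ^ 2 := pow_le_pow_left₀ (abs_nonneg _) h 2
  have hminsu : ∀ u : EuclideanSpace ℝ (Fin n), min (⟪l, u⟫ ^ 2) 1 ≤ w u := fun u =>
    min_le_min (hsu u) le_rfl
  -- integrability of the truncated quadratic forms
  have hF_int : ∀ r : ℝ, Integrable (fun u => min ((r * ⟪l, u⟫) ^ 2) 1) μ := by
    intro r
    apply Integrable.mono' (hw_int.const_mul (max (r ^ 2) 1))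
    · exact (((continuous_const.mul hs_cont).pow 2).min continuous_const).aestronglyMeasurable
    · refine Filter.Eventually.of_forall fun u => ?_
      have h0 : (0 : ℝ) ≤ min ((r * ⟪l, u⟫) ^ 2) 1 := le_min (by positivity) one_pos.le
      rw [Real.norm_eq_abs, abs_of_nonneg h0]
      calc min ((r * ⟪l, u⟫) ^ 2) 1 ≤ max (r ^ 2) 1 * min (⟪l, u⟫ ^ 2) 1 := min_sq_bound _ _
        _ ≤ max (r ^ 2) 1 * w u := by
            have : (0 : ℝ) ≤ max (r ^ 2) 1 := le_max_of_le_right one_pos.le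
            exact mul_le_mul_of_nonneg_left (hminsu u) this
  -- the two-variable integrand
  set g : EuclideanSpace ℝ (Fin n) → ℝ → ℝ :=
    fun u r => if |r * ⟪l, u⟫| ≤ 1 then 2 * r * ⟪l, u⟫ ^ 2 else 0 with hg_def
  have hg_meas : Measurable (Function.uncurry g) := by
    have h1 : Measurable fun p : EuclideanSpace ℝ (Fin n) × ℝ => |p.2 * ⟪l, p.1⟫| :=
      ((measurable_snd.mul (hs_meas.comp measurable_fst))).abs
    have hset : MeasurableSet {p : EuclideanSpace ℝ (Fin n) × ℝ | |p.2 * ⟪l, p.1⟫| ≤ 1} :=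
      measurableSet_le h1 measurable_const
    exact Measurable.ite hset
      ((measurable_const.mul measurable_snd).mul ((hs_meas.comp measurable_fst).pow_const 2))
      measurable_const
  -- bound for g
  set C : ℝ := max (2 * r₂) (2 / r₁) with hC_def
  have hC_nn : 0 ≤ C := le_max_of_le_left (by linarith)
  have hg_bound : ∀ u : EuclideanSpace ℝ (Fin n), ∀ r ∈ Set.Ioc r₁ r₂, ‖g u r‖ ≤ C * w u := by
    intro u r hr
    have hr0 : 0 < r := h₁.trans hr.1
    have hgval : g u r = if |r * ⟪l, u⟫| ≤ 1 then 2 * r * ⟪l, u⟫ ^ 2 else 0 := rfl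
    by_cases hcond : |r * ⟪l, u⟫| ≤ 1
    · rw [hgval, if_pos hcond, Real.norm_eq_abs, abs_of_nonneg (by positivity)]
      set s := ⟪l, u⟫ with hs_def
      have hb : 2 * r * s ^ 2 ≤ C * min (s ^ 2) 1 := by
        rcases le_total (s ^ 2) 1 with h | h
        · rw [min_eq_left h]
          have : 2 * r ≤ C := le_trans (by nlinarith [hr.2]) (le_max_left _ _)
          nlinarith [sq_nonneg s]
        · rw [min_eq_right h]
          have h2 : (r * s) ^ 2 ≤ 1 := by
            have := mul_le_mul hcond hcond (abs_nonneg _) zero_le_one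
            nlinarith [abs_mul_abs_self (r * s)]
          have h4 : 2 * r * s ^ 2 ≤ 2 / r := by
            rw [le_div_iff₀ hr0]; nlinarith
          have h5 : 2 / r ≤ 2 / r₁ := by gcongr; exact hr.1.le
          calc 2 * r * s ^ 2 ≤ 2 / r₁ := h4.trans h5
            _ ≤ C := le_max_right _ _
            _ = C * 1 := (mul_one C).symm
      calc 2 * r * ⟪l, u⟫ ^ 2 ≤ C * min (⟪l, u⟫ ^ 2) 1 := hb
        _ ≤ C * w u := mul_le_mul_of_nonneg_left (hminsu u) hC_nn
    · rw [hgval, if_neg hcond, norm_zero]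
      exact mul_nonneg hC_nn (hw_nn u)
  -- integrability on the product
  have hg_int : Integrable (Function.uncurry g)
      (μ.prod (volume.restrict (Set.Ioc r₁ r₂))) := by
    have hdom : Integrable (fun z : EuclideanSpace ℝ (Fin n) × ℝ => (C * w z.1) * 1)
        (μ.prod (volume.restrict (Set.Ioc r₁ r₂))) := by
      haveI : IsFiniteMeasure (volume.restrict (Set.Ioc r₁ r₂)) := by
        constructor
        rw [Measure.restrict_apply_univ]
        exact measure_Ioc_lt_top
      exact (hw_int.const_mul C).mul_prod (integrable_const 1)
    apply Integrable.mono' hdom hg_meas.aestronglyMeasurable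
    have hae : ∀ᵐ z : EuclideanSpace ℝ (Fin n) × ℝ
        ∂(μ.prod (volume.restrict (Set.Ioc r₁ r₂))), z.2 ∈ Set.Ioc r₁ r₂ := by
      rw [← Measure.restrict_univ (μ := μ), Measure.prod_restrict]
      filter_upwards [ae_restrict_mem (MeasurableSet.univ.prod measurableSet_Ioc)] with z hz
      exact hz.2
    filter_upwards [hae] with z hz
    calc ‖Function.uncurry g z‖ ≤ C * w z.1 := hg_bound z.1 z.2 hz
      _ = (C * w z.1) * 1 := (mul_one _).symm
  -- Step 1: combine the two integrals and apply the pointwise identity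
  rw [← integral_sub (hF_int r₂) (hF_int r₁)]
  have step1 : ∀ u : EuclideanSpace ℝ (Fin n),
      min ((r₂ * ⟪l, u⟫) ^ 2) 1 - min ((r₁ * ⟪l, u⟫) ^ 2) 1
        = ∫ r in Set.Ioc r₁ r₂, g u r := fun u =>
    key_identity ⟪l, u⟫ r₁ r₂ h₁ h₁₂.le
  rw [integral_congr_ae (Filter.Eventually.of_forall step1)]
  -- Step 2: Fubini
  rw [MeasureTheory.integral_integral_swap hg_int]
  -- Step 3: identify the inner integral with the stated form
  rw [intervalIntegral.integral_of_le h₁₂.le]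
  apply setIntegral_congr_fun measurableSet_Ioc
  intro r hr
  have hr0 : 0 < r := h₁.trans hr.1
  have hSmeas : MeasurableSet {u : EuclideanSpace ℝ (Fin n) | |r * ⟪l, u⟫| ≤ 1} :=
    measurableSet_le (measurable_const.mul hs_meas).abs measurable_const
  show (∫ u, g u r ∂μ)
      = 2 / r * ∫ u in {u : EuclideanSpace ℝ (Fin n) | |r * ⟪l, u⟫| ≤ 1}, (r * ⟪l, u⟫) ^ 2 ∂μ
  rw [← integral_indicator hSmeas, ← MeasureTheory.integral_const_mul]
  apply integral_congr_ae
  refine Filter.Eventually.of_forall fun u => ?_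
  rw [hg_def]; dsimp only
  rw [Set.indicator_apply]
  simp only [Set.mem_setOf_eq]
  split
  · field_simp
  · rw [mul_zero]
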